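/- Let A = FS{b_i} be an IP-set generated by a sequence (b_i) ⊆ ℕ, i.e. A consists of all finite sums b_{i_1} + ⋯ + b_{i_k} with i_1 < ⋯ < i_k. If a compact metric space X with homeomorphism T satisfies: {T^a : a ∈ A} is uniformly equicontinuous, then T is uniformly rigid (T^{b_i + ⋯} along suitable finite sums converges uniformly to the identity along some strictly increasing sequence). -/

import Mathlib

open MeasureTheory Filter Topology

theorem stmt14 {X : Type*} [MetricSpace X] [CompactSpace X] (T : X ≃ₜ X)
    (b : ℕ → ℕ) (hb : Function.Injective b)
    (A : Set ℕ)
    (hA : A = {m : ℕ | ∃ s : Finset ℕ, s.Nonempty ∧ m = ∑ i ∈ s, b i})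
    (hec : ∀ ε > 0, ∃ δ > 0, ∀ x y : X, dist x y < δ →
      ∀ a ∈ A, dist ((⇑T)^[a] x) ((⇑T)^[a] y) < ε) :
    ∃ n : ℕ → ℕ, StrictMono n ∧
      Tendsto (fun k => ⨆ x : X, dist ((⇑T)^[n k] x) x) atTop (𝓝 0) := by
  classical
  set s : ℕ → ℕ := fun m => ∑ i ∈ Finset.range (m + 1), b i with hs
  have hsA : ∀ m, s m ∈ A := by
    intro m
    rw [hA]
    exact ⟨Finset.range (m + 1), ⟨0, Finset.mem_range.2 (Nat.succ_pos m)⟩, rfl⟩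
  have hsmono : Monotone s := fun m m' h =>
    Finset.sum_le_sum_of_subset (Finset.range_subset_range.2 (by omega))
  have hsbig : ∀ M : ℕ, ∃ m, M < s m := by
    intro M
    have hfin : {i : ℕ | b i ≤ M}.Finite := by
      have hsub : {i : ℕ | b i ≤ M} ⊆ b ⁻¹' Set.Iic M := fun i hi => hi
      exact ((Set.finite_Iic M).preimage hb.injOn).subset hsub
    obtain ⟨i, hi⟩ := hfin.infinite_compl.nonempty
    refine ⟨i, lt_of_lt_of_le (by simpa using hi) ?_⟩
    exact Finset.single_le_sum (fun j _ => Nat.zero_le _) (Finset.self_mem_range_succ i)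
  -- key lemma: arbitrarily large almost-periods
  have key : ∀ δ : ℝ, 0 < δ → ∀ N : ℕ, ∃ d : ℕ, N < d ∧ ∀ z : X, dist ((⇑T)^[d] z) z < δ := by
    intro δ hδ N
    rcases isEmpty_or_nonempty X with hX | hX
    · exact ⟨N + 1, Nat.lt_succ_self N, fun z => (IsEmpty.false z).elim⟩
    obtain ⟨δ', hδ', hδ'p⟩ := hec (δ / 4) (by linarith)
    obtain ⟨t, -, htfin, htcov⟩ := finite_cover_balls_of_compact (isCompact_univ (X := X)) hδ'
    set tf : Finset X := htfin.toFinset with htf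
    set F : ℕ → (↥tf → X) := fun m y => (⇑T)^[s m] (y : X) with hF
    obtain ⟨a, -, φ, hφ, hconv⟩ :=
      isCompact_univ.tendsto_subseq (x := F) (fun m => Set.mem_univ _)
    rw [Metric.tendsto_atTop] at hconv
    obtain ⟨J, hJ⟩ := hconv (δ / 8) (by linarith)
    obtain ⟨m0, hm0⟩ := hsbig (s (φ J) + N)
    set k : ℕ := max J m0 with hk
    have hJk : J ≤ k := le_max_left _ _
    have hsk : s (φ J) + N < s (φ k) :=
      lt_of_lt_of_le hm0 (hsmono ((le_max_right J m0).trans hφ.le_apply))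
    set a0 : ℕ := s (φ J) with ha0
    set a1 : ℕ := s (φ k) with ha1
    refine ⟨a1 - a0, by omega, fun z => ?_⟩
    set x : X := (⇑T.symm)^[a0] z with hx
    have hxz : (⇑T)^[a0] x = z :=
      (Function.LeftInverse.iterate T.apply_symm_apply a0) z
    have hit : (⇑T)^[a1 - a0] z = (⇑T)^[a1] x := by
      rw [← hxz, ← Function.iterate_add_apply]
      congr 1
      omega
    -- find a net point close to x
    have hxcov := htcov (Set.mem_univ x)
    simp only [Set.mem_iUnion, Metric.mem_ball] at hxcov
    obtain ⟨y, hyt, hxy⟩ := hxcov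
    have hytf : y ∈ tf := htfin.mem_toFinset.2 hyt
    set yc : ↥tf := ⟨y, hytf⟩ with hyc
    have hnet : dist (F (φ k) yc) (F (φ J) yc) < δ / 4 := by
      have h1 := hJ k hJk
      have h2 := hJ J le_rfl
      calc dist (F (φ k) yc) (F (φ J) yc) ≤ dist (F (φ k)) (F (φ J)) :=
            dist_le_pi_dist _ _ yc
        _ ≤ dist (F (φ k)) a + dist (F (φ J)) a := dist_triangle_right _ _ _
        _ < δ / 8 + δ / 8 := by
            have h1' : dist (F (φ k)) a < δ / 8 := h1
            have h2' : dist (F (φ J)) a < δ / 8 := h2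
            linarith
        _ = δ / 4 := by ring
    have e1 : dist ((⇑T)^[a1] x) ((⇑T)^[a1] y) < δ / 4 := hδ'p x y hxy a1 (hsA _)
    have e3 : dist ((⇑T)^[a0] y) ((⇑T)^[a0] x) < δ / 4 := by
      have := hδ'p y x (by rwa [dist_comm]) a0 (hsA _)
      exact this
    have e2 : dist ((⇑T)^[a1] y) ((⇑T)^[a0] y) < δ / 4 := hnet
    calc dist ((⇑T)^[a1 - a0] z) z = dist ((⇑T)^[a1] x) ((⇑T)^[a0] x) := by rw [hit, hxz]
      _ ≤ dist ((⇑T)^[a1] x) ((⇑T)^[a1] y) + dist ((⇑T)^[a1] y) ((⇑T)^[a0] y)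
            + dist ((⇑T)^[a0] y) ((⇑T)^[a0] x) := dist_triangle4 _ _ _ _
      _ < δ / 4 + δ / 4 + δ / 4 := by linarith
      _ < δ := by linarith
  -- build the sequence recursively
  have key' : ∀ k N : ℕ, ∃ d : ℕ, N < d ∧ ∀ z : X, dist ((⇑T)^[d] z) z < 1 / (k + 1) :=
    fun k N => key (1 / (k + 1)) (by positivity) N
  set n : ℕ → ℕ := fun k =>
    Nat.rec (key' 0 0).choose (fun k ih => (key' (k + 1) ih).choose) k with hn
  have hstep : ∀ k, n k < n (k + 1) := fun k => (key' (k + 1) (n k)).choose_spec.1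
  have hbound : ∀ k, ∀ z : X, dist ((⇑T)^[n k] z) z < 1 / (k + 1) := by
    intro k
    cases k with
    | zero => exact (key' 0 0).choose_spec.2
    | succ j => exact (key' (j + 1) (n j)).choose_spec.2
  refine ⟨n, strictMono_nat_of_lt_succ hstep, ?_⟩
  have h0 : ∀ k : ℕ, 0 ≤ ⨆ x : X, dist ((⇑T)^[n k] x) x :=
    fun k => Real.iSup_nonneg (fun x => dist_nonneg)
  have h1 : ∀ k : ℕ, (⨆ x : X, dist ((⇑T)^[n k] x) x) ≤ 1 / (k + 1) :=
    fun k => Real.iSup_le (fun x => (hbound k x).le) (by positivity)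
  exact squeeze_zero h0 h1 tendsto_one_div_add_atTop_nhds_zero_nat
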